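/- The commutant of the q-integration operator V_q on W(𝔻) is exactly the set of q-Duhamel multiplication operators: a bounded operator A on W(𝔻) satisfies A V_q = V_q A if and only if A = D_f for some f ∈ W(𝔻), namely f = A1 and A g = f ⋆_q g for all g. -/

import Mathlib

open Finset

/-- The Wiener algebra `W(𝔻)`, identified with `ℓ¹(ℕ)` via Taylor coefficients. -/
noncomputable abbrev Wiener := lp (fun _ : ℕ => ℂ) 1

noncomputable def qfact (q : ℂ) (n : ℕ) : ℂ :=
  ∏ j ∈ Finset.range n, (1 - q ^ (j + 1)) / (1 - q)

/-- Coefficients of the q-Duhamel product. -/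
noncomputable def duh (q : ℂ) (a b : ℕ → ℂ) (n : ℕ) : ℂ :=
  ∑ k ∈ Finset.range (n + 1), a k * b (n - k) * qfact q k * qfact q (n - k) / qfact q n

/-- Evaluation of the `n`-th coefficient, as a continuous linear functional. -/
noncomputable def ev (n : ℕ) : Wiener →L[ℂ] ℂ :=
  LinearMap.mkContinuous
    { toFun := fun f => (f : ∀ _ : ℕ, ℂ) n
      map_add' := fun f g => rfl
      map_smul' := fun c f => rfl }
    1 (fun f => by rw [one_mul]; exact lp.norm_apply_le_norm one_ne_zero f n)

lemma ev_apply (n : ℕ) (f : Wiener) : ev n f = (f : ∀ _ : ℕ, ℂ) n := rfl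

lemma qfact_succ (q : ℂ) (n : ℕ) :
    qfact q (n + 1) = qfact q n * ((1 - q ^ (n + 1)) / (1 - q)) := by
  rw [qfact, qfact, Finset.prod_range_succ]

lemma qfact_zero (q : ℂ) : qfact q 0 = 1 := by simp [qfact]

section Main

variable {q : ℝ} (hq0 : 0 < q) (hq1 : q < 1)

include hq0 hq1 in
lemma brk_ne (n : ℕ) : (1 - (q : ℂ) ^ (n + 1)) / (1 - (q : ℂ)) ≠ 0 := by
  have h1 : (1 : ℂ) - (q : ℂ) ≠ 0 := by
    rw [show (1 : ℂ) - (q : ℂ) = (((1 - q : ℝ)) : ℂ) by push_cast; ring]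
    exact_mod_cast (by linarith : (1 : ℝ) - q ≠ 0)
  have h2 : (1 : ℂ) - (q : ℂ) ^ (n + 1) ≠ 0 := by
    have hr : q ^ (n + 1) < 1 := pow_lt_one₀ hq0.le hq1 (Nat.succ_ne_zero n)
    rw [show (1 : ℂ) - (q : ℂ) ^ (n + 1) = (((1 - q ^ (n + 1) : ℝ)) : ℂ) by push_cast; ring]
    exact_mod_cast (by linarith : (1 : ℝ) - q ^ (n + 1) ≠ 0)
  exact div_ne_zero h2 h1

include hq0 hq1 in
lemma qfact_ne (n : ℕ) : qfact (q : ℂ) n ≠ 0 := by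
  refine Finset.prod_ne_zero_iff.mpr fun j _ => brk_ne hq0 hq1 j

end Main

/-- The commutant of the q-integration operator `V_q` on `W(𝔻)` consists exactly of the
q-Duhamel multiplication operators: a bounded operator `A` commutes with `V_q` iff
`A g = f ⋆_q g` for some `f ∈ W(𝔻)` (namely `f = A 1`). -/
theorem commutant_Vq (q : ℝ) (hq0 : 0 < q) (hq1 : q < 1) (V A : Wiener →L[ℂ] Wiener)
    (hV : ∀ a : Wiener, (V a : ∀ _ : ℕ, ℂ) 0 = 0 ∧
      ∀ n : ℕ, (V a : ∀ _ : ℕ, ℂ) (n + 1)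
        = (a : ∀ _ : ℕ, ℂ) n / ((1 - (q : ℂ) ^ (n + 1)) / (1 - (q : ℂ)))) :
    A.comp V = V.comp A ↔
      ∃ f : Wiener, ∀ (g : Wiener) (n : ℕ),
        (A g : ∀ _ : ℕ, ℂ) n = duh (q : ℂ) (f : ∀ _ : ℕ, ℂ) (g : ∀ _ : ℕ, ℂ) n := by
  have hbne : ∀ n, (1 - (q : ℂ) ^ (n + 1)) / (1 - (q : ℂ)) ≠ 0 := brk_ne hq0 hq1
  have hfne : ∀ n, qfact (q : ℂ) n ≠ 0 := qfact_ne hq0 hq1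
  constructor
  · intro hAV
    set f : Wiener := A (lp.single 1 0 1) with hf
    refine ⟨f, ?_⟩
    -- key formula on basis vectors
    have key : ∀ k n : ℕ, (A (lp.single 1 k 1) : ∀ _ : ℕ, ℂ) n =
        if k ≤ n then (f : ∀ _ : ℕ, ℂ) (n - k) * qfact (q : ℂ) k * qfact (q : ℂ) (n - k)
          / qfact (q : ℂ) n else 0 := by
      intro k
      induction k with
      | zero =>
        intro n
        simp only [Nat.zero_le, if_true, Nat.sub_zero, qfact_zero, hf]
        rw [mul_one, mul_div_assoc, div_self (hfne n), mul_one]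
      | succ k ih =>
        -- V (single k 1) = ((1-q^(k+1))/(1-q))⁻¹ • single (k+1) 1
        have hVs : V (lp.single 1 k 1) =
            ((1 - (q : ℂ) ^ (k + 1)) / (1 - (q : ℂ)))⁻¹ • lp.single 1 (k + 1) 1 := by
          apply lp.ext
          funext m
          rw [lp.coeFn_smul]
          match m with
          | 0 =>
            rw [(hV (lp.single 1 k 1)).1]
            simp only [Pi.smul_apply, smul_eq_mul]
            rw [lp.single_apply, Pi.single_apply, if_neg (by omega : (0 : ℕ) ≠ k + 1), mul_zero]
          | m + 1 =>
            rw [(hV (lp.single 1 k 1)).2 m]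
            simp only [Pi.smul_apply, smul_eq_mul]
            by_cases hm : m = k
            · subst hm
              rw [lp.single_apply, Pi.single_apply, if_pos rfl, lp.single_apply, Pi.single_apply, if_pos rfl]
              rw [div_eq_mul_inv, one_mul, mul_one]
            · rw [lp.single_apply, Pi.single_apply, if_neg hm, lp.single_apply, Pi.single_apply,
                if_neg (by omega : m + 1 ≠ k + 1)]
              simp
        have hcomm : A (V (lp.single 1 k 1)) = V (A (lp.single 1 k 1)) := by
          have := congrFun (congrArg (fun T : Wiener →L[ℂ] Wiener => (T : Wiener → Wiener))
            hAV) (lp.single 1 k 1)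
          simpa using this
        have hA1 : A (lp.single 1 (k + 1) 1) =
            ((1 - (q : ℂ) ^ (k + 1)) / (1 - (q : ℂ))) • V (A (lp.single 1 k 1)) := by
          rw [← hcomm, hVs, map_smul, smul_smul, mul_inv_cancel₀ (hbne k), one_smul]
        intro n
        have hA1n : (A (lp.single 1 (k + 1) 1) : ∀ _ : ℕ, ℂ) n =
            ((1 - (q : ℂ) ^ (k + 1)) / (1 - (q : ℂ))) *
              (V (A (lp.single 1 k 1)) : ∀ _ : ℕ, ℂ) n := by
          rw [hA1, lp.coeFn_smul]; rfl
        match n with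
        | 0 =>
          rw [hA1n, (hV (A (lp.single 1 k 1))).1]
          simp
        | m + 1 =>
          rw [hA1n, (hV (A (lp.single 1 k 1))).2 m, ih m]
          by_cases hkm : k ≤ m
          · rw [if_pos hkm, if_pos (by omega : k + 1 ≤ m + 1)]
            have hsub : m + 1 - (k + 1) = m - k := by omega
            rw [hsub, qfact_succ, qfact_succ]
            have h1 := hbne k
            have h2 := hbne m
            have h3 := hfne m
            field_simp
          · rw [if_neg hkm, if_neg (by omega : ¬ k + 1 ≤ m + 1)]
            simp
    -- extend to all g by continuity
    intro g n
    have hsum : HasSum (fun k : ℕ => (lp.single 1 k ((g : ∀ _ : ℕ, ℂ) k) : Wiener)) g :=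
      lp.hasSum_single (by norm_num) g
    have hsum2 : HasSum
        (fun k : ℕ => ((ev n).comp A) (lp.single 1 k ((g : ∀ _ : ℕ, ℂ) k) : Wiener))
        (((ev n).comp A) g) := hsum.mapL _
    have hterm : ∀ k : ℕ,
        ((ev n).comp A) (lp.single 1 k ((g : ∀ _ : ℕ, ℂ) k) : Wiener) =
        (g : ∀ _ : ℕ, ℂ) k * (if k ≤ n then (f : ∀ _ : ℕ, ℂ) (n - k) * qfact (q : ℂ) k *
          qfact (q : ℂ) (n - k) / qfact (q : ℂ) n else 0) := by
      intro k
      have h1 : (lp.single 1 k ((g : ∀ _ : ℕ, ℂ) k) : Wiener) =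
          ((g : ∀ _ : ℕ, ℂ) k) • (lp.single 1 k (1 : ℂ) : Wiener) := by
        rw [← lp.single_smul]
        norm_num
      rw [h1]
      simp only [ContinuousLinearMap.comp_apply, map_smul, ev_apply, lp.coeFn_smul,
        Pi.smul_apply, smul_eq_mul, key k n]
    have hvanish : ∀ k ∉ Finset.range (n + 1),
        ((ev n).comp A) (lp.single 1 k ((g : ∀ _ : ℕ, ℂ) k) : Wiener) = 0 := by
      intro k hk
      rw [hterm k, if_neg (by simp at hk; omega)]
      simp
    have hfin : HasSum
        (fun k : ℕ => ((ev n).comp A) (lp.single 1 k ((g : ∀ _ : ℕ, ℂ) k) : Wiener))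
        (∑ k ∈ Finset.range (n + 1),
          ((ev n).comp A) (lp.single 1 k ((g : ∀ _ : ℕ, ℂ) k) : Wiener)) :=
      hasSum_sum_of_ne_finset_zero hvanish
    have heq : ((ev n).comp A) g = ∑ k ∈ Finset.range (n + 1),
        ((ev n).comp A) (lp.single 1 k ((g : ∀ _ : ℕ, ℂ) k) : Wiener) :=
      hsum2.unique hfin
    rw [show (A g : ∀ _ : ℕ, ℂ) n = ((ev n).comp A) g from rfl, heq]
    rw [duh]
    rw [← Finset.sum_range_reflect
      (fun k => (f : ∀ _ : ℕ, ℂ) k * (g : ∀ _ : ℕ, ℂ) (n - k) * qfact (q : ℂ) k *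
        qfact (q : ℂ) (n - k) / qfact (q : ℂ) n) (n + 1)]
    refine Finset.sum_congr rfl fun k hk => ?_
    have hkn : k ≤ n := by simp at hk; omega
    rw [hterm k, if_pos hkn]
    have h1 : n + 1 - 1 - k = n - k := by omega
    have h2 : n - (n - k) = k := by omega
    rw [h1, h2]
    ring
  · rintro ⟨f, hf⟩
    ext g : 1
    apply lp.ext
    funext n
    simp only [ContinuousLinearMap.comp_apply]
    match n with
    | 0 =>
      rw [(hV (A g)).1, hf (V g) 0, duh, Finset.sum_range_one]
      simp only [Nat.sub_zero, (hV g).1]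
      rw [mul_zero, zero_mul, zero_mul, zero_div]
    | n + 1 =>
      rw [(hV (A g)).2 n, hf (V g) (n + 1), hf g n, duh, duh]
      rw [Finset.sum_range_succ]
      have hlast : (f : ∀ _ : ℕ, ℂ) (n + 1) * (V g : ∀ _ : ℕ, ℂ) (n + 1 - (n + 1)) *
          qfact (q : ℂ) (n + 1) * qfact (q : ℂ) (n + 1 - (n + 1)) / qfact (q : ℂ) (n + 1) = 0 := by
        rw [Nat.sub_self, (hV g).1, mul_zero, zero_mul, zero_mul, zero_div]
      rw [hlast, add_zero, Finset.sum_div]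
      refine Finset.sum_congr rfl fun k hk => ?_
      have hkn : k ≤ n := by simp at hk; omega
      have h1 : n + 1 - k = (n - k) + 1 := by omega
      rw [h1, (hV g).2 (n - k), qfact_succ (q : ℂ) (n - k), qfact_succ (q : ℂ) n]
      have hgen : ∀ x y B1 B2 Q1 Q2 Q3 : ℂ, B1 ≠ 0 → B2 ≠ 0 → Q3 ≠ 0 →
          x * (y / B1) * Q1 * (Q2 * B1) / (Q3 * B2) = x * y * Q1 * Q2 / Q3 / B2 := by
        intro x y B1 B2 Q1 Q2 Q3 h1' h2' h3'
        field_simp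
      exact hgen _ _ _ _ _ _ _ (hbne (n - k)) (hbne n) (hfne n)
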